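/- arXiv:1508.05768 — 3 statements merged into one kernel-verified Lean document; each statement's English description precedes it below -/
import Mathlib

section
/- For q ∈ ℂˣ define u_q(k) = |q|^{Σ_{i<j} k_i k_j} and w_{B,ρ}(k) = ([k]_{|q|²}!/[|k|]_{|q|²}!)^{1/2} u_q(k) ρ^{|k|} for ρ > 0. Then the norm ‖Σ_k c_k x^k‖ = Σ_k |c_k| w_{B,ρ}(k) on 𝒪_q^reg(ℂⁿ) is submultiplicative; equivalently, for all k, ℓ ∈ ℤ₊ⁿ: w_{B,ρ}(k+ℓ) · |q|^{−Σ_{i>j} k_i ℓ_j} ≤ w_{B,ρ}(k) · w_{B,ρ}(ℓ). -/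
open Finset

/-- `[m]_q = 1 + q + ⋯ + q^(m-1)`. -/
noncomputable def qNum (s : ℝ) (m : ℕ) : ℝ := ∑ i ∈ Finset.range m, s ^ i

/-- `[m]_q! = [1]_q ⋯ [m]_q`, with `[0]_q! = 1`. -/
noncomputable def qFact (s : ℝ) (m : ℕ) : ℝ := ∏ i ∈ Finset.range m, qNum s (i + 1)

/-- `[k]_q! = [k₁]_q! ⋯ [kₙ]_q!` for a multi-index `k`. -/
noncomputable def qFactM {n : ℕ} (s : ℝ) (k : Fin n → ℕ) : ℝ := ∏ i, qFact s (k i)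

/-- `Σ_{i<j} kᵢ ℓⱼ`. -/
def sumLT {n : ℕ} (k l : Fin n → ℕ) : ℕ :=
  ∑ p ∈ Finset.univ.filter (fun p : Fin n × Fin n => p.1 < p.2), k p.1 * l p.2

/-- `Σ_{i>j} kᵢ ℓⱼ`. -/
def sumGT {n : ℕ} (k l : Fin n → ℕ) : ℕ :=
  ∑ p ∈ Finset.univ.filter (fun p : Fin n × Fin n => p.2 < p.1), k p.1 * l p.2

/-- The weight `w_{B,ρ}(k) = ([k]_{|q|²}!/[|k|]_{|q|²}!)^(1/2) |q|^(Σ_{i<j} kᵢ kⱼ) ρ^|k|`. -/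
noncomputable def wBall {n : ℕ} (q : ℂ) (ρ : ℝ) (k : Fin n → ℕ) : ℝ :=
  Real.sqrt (qFactM (‖q‖ ^ 2) k / qFact (‖q‖ ^ 2) (∑ i, k i)) *
    ‖q‖ ^ (sumLT k k) * ρ ^ (∑ i, k i)

lemma qNum_pos {s : ℝ} (hs : 0 < s) (m : ℕ) : 0 < qNum s (m + 1) :=
  Finset.sum_pos (fun i _ => pow_pos hs i) Finset.nonempty_range_add_one

lemma qFact_pos {s : ℝ} (hs : 0 < s) (m : ℕ) : 0 < qFact s m :=
  Finset.prod_pos fun i _ => qNum_pos hs i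

lemma qFact_succ (s : ℝ) (m : ℕ) : qFact s (m + 1) = qFact s m * qNum s (m + 1) :=
  Finset.prod_range_succ _ _

lemma qNum_add (s : ℝ) (x y : ℕ) : qNum s (x + y) = qNum s x + s ^ x * qNum s y := by
  unfold qNum
  rw [Finset.sum_range_add, Finset.mul_sum]
  simp [pow_add]

noncomputable def qBin (s : ℝ) (x y : ℕ) : ℝ := qFact s (x + y) / (qFact s x * qFact s y)

lemma qBin_pos {s : ℝ} (hs : 0 < s) (x y : ℕ) : 0 < qBin s x y :=
  div_pos (qFact_pos hs _) (mul_pos (qFact_pos hs _) (qFact_pos hs _))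

lemma qBin_x0 {s : ℝ} (hs : 0 < s) (x : ℕ) : qBin s x 0 = 1 := by
  simp only [qBin, Nat.add_zero]
  rw [show qFact s 0 = 1 from Finset.prod_range_zero _, mul_one, div_self (qFact_pos hs x).ne']

lemma qBin_0y {s : ℝ} (hs : 0 < s) (y : ℕ) : qBin s 0 y = 1 := by
  simp only [qBin, Nat.zero_add]
  rw [show qFact s 0 = 1 from Finset.prod_range_zero _, one_mul, div_self (qFact_pos hs y).ne']

lemma qBin_pascal {s : ℝ} (hs : 0 < s) (x y : ℕ) :
    qBin s (x + 1) (y + 1) = qBin s x (y + 1) + s ^ (x + 1) * qBin s (x + 1) y := by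
  have h3 : qFact s (x + 1 + (y + 1)) =
      qFact s (x + y + 1) * (qNum s (x + 1) + s ^ (x + 1) * qNum s (y + 1)) := by
    have e : x + 1 + (y + 1) = (x + y + 1) + 1 := by omega
    rw [e, qFact_succ, ← qNum_add]
    congr 2
    omega
  unfold qBin
  rw [show x + (y + 1) = x + y + 1 from by omega, show x + 1 + y = x + y + 1 from by omega, h3,
    qFact_succ s x, qFact_succ s y]
  have h1 := (qFact_pos hs x).ne'
  have h2 := (qFact_pos hs y).ne'
  have h4 := (qNum_pos hs x).ne'
  have h5 := (qNum_pos hs y).ne'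
  field_simp

lemma qBin_step_left {s : ℝ} (hs : 0 < s) (x b : ℕ) : qBin s x b ≤ qBin s (x + 1) b := by
  cases b with
  | zero => rw [qBin_x0 hs, qBin_x0 hs]
  | succ y =>
    rw [qBin_pascal hs]
    nlinarith [qBin_pos hs (x + 1) y, pow_pos hs (x + 1)]

lemma qBin_mono_left {s : ℝ} (hs : 0 < s) (a b c : ℕ) : qBin s a b ≤ qBin s (a + c) b := by
  induction c with
  | zero => simp
  | succ c ih => exact ih.trans (qBin_step_left hs (a + c) b)

lemma qBin_step_right {s : ℝ} (hs : 0 < s) (a y : ℕ) :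
    s ^ a * qBin s a y ≤ qBin s a (y + 1) := by
  cases a with
  | zero => rw [qBin_0y hs, qBin_0y hs]; simp
  | succ x =>
    rw [qBin_pascal hs]
    nlinarith [qBin_pos hs x (y + 1)]

lemma qBin_grow_right {s : ℝ} (hs : 0 < s) (a b d : ℕ) :
    s ^ (a * d) * qBin s a b ≤ qBin s a (b + d) := by
  induction d with
  | zero => simp
  | succ d ih =>
    have h1 : s ^ (a * (d + 1)) * qBin s a b = s ^ a * (s ^ (a * d) * qBin s a b) := by
      rw [← mul_assoc, ← pow_add]; ring_nf
    rw [h1, show b + (d + 1) = (b + d) + 1 from rfl]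
    calc s ^ a * (s ^ (a * d) * qBin s a b) ≤ s ^ a * qBin s a (b + d) := by
          exact mul_le_mul_of_nonneg_left ih (le_of_lt (pow_pos hs a))
      _ ≤ qBin s a (b + d + 1) := qBin_step_right hs a (b + d)

lemma qBin_key {s : ℝ} (hs : 0 < s) :
    ∀ N c d a b, c + d ≤ N → qBin s a b * qBin s c d * s ^ (a * d) ≤ qBin s (a + c) (b + d) := by
  intro N
  induction N with
  | zero =>
    intro c d a b h
    obtain ⟨rfl, rfl⟩ : c = 0 ∧ d = 0 := by omega
    simp [qBin_x0 hs]
  | succ N ih =>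
    intro c d a b h
    cases d with
    | zero =>
      simp only [Nat.mul_zero, pow_zero, mul_one, Nat.add_zero, qBin_x0 hs]
      exact qBin_mono_left hs a b c
    | succ d =>
      cases c with
      | zero =>
        simp only [qBin_0y hs, mul_one, Nat.add_zero]
        rw [mul_comm]
        exact qBin_grow_right hs a b (d + 1)
      | succ c =>
        have hc : c + (d + 1) ≤ N := by omega
        have hd : (c + 1) + d ≤ N := by omega
        have h1 := ih c (d + 1) a b hc
        have h2 := ih (c + 1) d a b hd
        rw [qBin_pascal hs c d]
        have hgoal : qBin s (a + (c + 1)) (b + (d + 1)) =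
            qBin s (a + c) (b + (d + 1)) + s ^ (a + c + 1) * qBin s (a + c + 1) (b + d) := by
          rw [show a + (c + 1) = (a + c) + 1 from rfl, show b + (d + 1) = (b + d) + 1 from rfl,
            qBin_pascal hs]
        rw [hgoal]
        have e1 : qBin s a b * (qBin s c (d + 1) + s ^ (c + 1) * qBin s (c + 1) d) *
            s ^ (a * (d + 1)) =
            qBin s a b * qBin s c (d + 1) * s ^ (a * (d + 1)) +
            s ^ (a + c + 1) * (qBin s a b * qBin s (c + 1) d * s ^ (a * d)) := by
          rw [show a * (d + 1) = a * d + a from by ring,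
            show a + c + 1 = a + (c + 1) from rfl, pow_add, pow_add]
          ring
        rw [e1]
        have h2' : s ^ (a + c + 1) * (qBin s a b * qBin s (c + 1) d * s ^ (a * d)) ≤
            s ^ (a + c + 1) * qBin s (a + (c + 1)) (b + d) :=
          mul_le_mul_of_nonneg_left h2 (le_of_lt (pow_pos hs _))
        have := add_le_add h1 h2'
        simpa [show a + (c + 1) = a + c + 1 from rfl] using this

def sumLT0 {n : ℕ} (k l : Fin n → ℕ) : ℕ :=
  ∑ p ∈ Finset.univ.filter (fun p : Fin n × Fin n => p.1 < p.2), k p.1 * l p.2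

lemma sumLT0_eq {n : ℕ} (k l : Fin n → ℕ) :
    sumLT0 k l = ∑ i, ∑ j, if i < j then k i * l j else 0 := by
  rw [sumLT0, Finset.sum_filter, Fintype.sum_prod_type]

lemma sumLT0_succ {n : ℕ} (k l : Fin (n + 1) → ℕ) :
    sumLT0 k l = (∑ j : Fin n, k 0 * l j.succ) + sumLT0 (k ∘ Fin.succ) (l ∘ Fin.succ) := by
  rw [sumLT0_eq, sumLT0_eq, Fin.sum_univ_succ]
  congr 1
  · rw [Fin.sum_univ_succ]
    simp [Fin.succ_pos]
  · apply Finset.sum_congr rfl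
    intro i _
    rw [Fin.sum_univ_succ]
    simp [Fin.succ_lt_succ_iff]

lemma sumGT0 {n : ℕ} (k l : Fin n → ℕ) :
    (∑ p ∈ Finset.univ.filter (fun p : Fin n × Fin n => p.2 < p.1), k p.1 * l p.2) =
      sumLT0 l k := by
  rw [sumLT0]
  apply Finset.sum_nbij' (fun p => Prod.swap p) (fun p => Prod.swap p) <;>
    simp [mul_comm]

lemma multi_key {s : ℝ} (hs : 0 < s) {n : ℕ} (k l : Fin n → ℕ) :
    (∏ i, qBin s (k i) (l i)) * s ^ (sumLT0 k l) ≤ qBin s (∑ i, k i) (∑ i, l i) := by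
  induction n with
  | zero => simp [sumLT0, qBin_x0 hs]
  | succ n ih =>
    rw [sumLT0_succ, Fin.prod_univ_succ, Fin.sum_univ_succ, Fin.sum_univ_succ, pow_add]
    have ih' := ih (k ∘ Fin.succ) (l ∘ Fin.succ)
    have key := qBin_key hs ((∑ i : Fin n, k i.succ) + (∑ i : Fin n, l i.succ))
      (∑ i : Fin n, k i.succ) (∑ i : Fin n, l i.succ) (k 0) (l 0) le_rfl
    calc qBin s (k 0) (l 0) * (∏ i : Fin n, qBin s (k i.succ) (l i.succ)) *
          (s ^ (∑ j : Fin n, k 0 * l j.succ) * s ^ sumLT0 (k ∘ Fin.succ) (l ∘ Fin.succ))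
        = (qBin s (k 0) (l 0) * s ^ (∑ j : Fin n, k 0 * l j.succ)) *
          ((∏ i : Fin n, qBin s ((k ∘ Fin.succ) i) ((l ∘ Fin.succ) i)) *
            s ^ sumLT0 (k ∘ Fin.succ) (l ∘ Fin.succ)) := by
          simp only [Function.comp_apply]; ring
      _ ≤ (qBin s (k 0) (l 0) * s ^ (∑ j : Fin n, k 0 * l j.succ)) *
            qBin s (∑ i : Fin n, (k ∘ Fin.succ) i) (∑ i : Fin n, (l ∘ Fin.succ) i) := by
          apply mul_le_mul_of_nonneg_left ih'
          have := qBin_pos hs (k 0) (l 0)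
          positivity
      _ ≤ qBin s (k 0 + ∑ i : Fin n, k i.succ) (l 0 + ∑ i : Fin n, l i.succ) := by
          simp only [Function.comp_apply]
          rw [show (∑ j : Fin n, k 0 * l j.succ) = k 0 * ∑ j : Fin n, l j.succ from
            (Finset.mul_sum _ _ _).symm]
          calc qBin s (k 0) (l 0) * s ^ (k 0 * ∑ j : Fin n, l j.succ) *
                qBin s (∑ i : Fin n, k i.succ) (∑ i : Fin n, l i.succ)
              = qBin s (k 0) (l 0) * qBin s (∑ i : Fin n, k i.succ) (∑ i : Fin n, l i.succ) *
                s ^ (k 0 * ∑ j : Fin n, l j.succ) := by ring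
            _ ≤ _ := key

lemma sumLT_eq_LT0 {n : ℕ} (k l : Fin n → ℕ) : sumLT k l = sumLT0 k l := rfl

lemma sumGT_eq {n : ℕ} (k l : Fin n → ℕ) : sumGT k l = sumLT l k := sumGT0 k l

lemma sumLT_split {n : ℕ} (k l : Fin n → ℕ) :
    sumLT (k + l) (k + l) = sumLT k k + sumLT l l + sumLT k l + sumGT k l := by
  rw [sumGT_eq]
  unfold sumLT
  rw [← Finset.sum_add_distrib, ← Finset.sum_add_distrib, ← Finset.sum_add_distrib]
  apply Finset.sum_congr rfl
  intro p _
  simp only [Pi.add_apply]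
  ring

lemma qFactM_pos {s : ℝ} (hs : 0 < s) {n : ℕ} (k : Fin n → ℕ) : 0 < qFactM s k :=
  Finset.prod_pos fun i _ => qFact_pos hs _

lemma prodBin {s : ℝ} (hs : 0 < s) {n : ℕ} (k l : Fin n → ℕ) :
    ∏ i, qBin s (k i) (l i) = qFactM s (k + l) / (qFactM s k * qFactM s l) := by
  unfold qBin qFactM
  rw [← Finset.prod_mul_distrib, ← Finset.prod_div_distrib]
  exact Finset.prod_congr rfl fun i _ => rfl

/-- Submultiplicativity of the quantum-ball norm on `𝒪_q^reg(ℂⁿ)`, in its equivalent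
weight form: `w_{B,ρ}(k+ℓ) · |q|^(−Σ_{i>j} kᵢ ℓⱼ) ≤ w_{B,ρ}(k) · w_{B,ρ}(ℓ)`. -/
theorem stmt12 {n : ℕ} (q : ℂ) (hq : q ≠ 0) (ρ : ℝ) (hρ : 0 < ρ) (k l : Fin n → ℕ) :
    wBall q ρ (k + l) * (‖q‖ : ℝ) ^ (-(sumGT k l : ℤ)) ≤
      wBall q ρ k * wBall q ρ l := by
  have ha : (0 : ℝ) < ‖q‖ := by
    simpa using norm_pos_iff.mpr hq
  set a : ℝ := ‖q‖ with ha_def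
  set s : ℝ := a ^ 2 with hs_def
  have hs : 0 < s := by positivity
  set K := ∑ i, k i with hK
  set L := ∑ i, l i with hL
  have hKL : ∑ i, (k + l) i = K + L := by
    simp only [Pi.add_apply, hK, hL, Finset.sum_add_distrib]
  -- the key scalar inequality
  have multi := multi_key hs k l
  rw [prodBin hs, ← sumLT_eq_LT0] at multi
  set A := qFactM s (k + l) with hA
  set Ak := qFactM s k with hAk
  set Al := qFactM s l with hAl
  set F := qFact s (K + L) with hF
  set Fk := qFact s K with hFk
  set Fl := qFact s L with hFl
  have hApos : 0 < A := qFactM_pos hs _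
  have hAkpos : 0 < Ak := qFactM_pos hs _
  have hAlpos : 0 < Al := qFactM_pos hs _
  have hFpos : 0 < F := qFact_pos hs _
  have hFkpos : 0 < Fk := qFact_pos hs _
  have hFlpos : 0 < Fl := qFact_pos hs _
  have hqbin : qBin s (∑ i, k i) (∑ i, l i) = F / (Fk * Fl) := by
    rw [qBin, ← hK, ← hL]
  rw [hqbin] at multi
  -- multi : A / (Ak * Al) * s ^ sumLT k l ≤ F / (Fk * Fl)
  have star : A / F * s ^ sumLT k l ≤ Ak / Fk * (Al / Fl) := by
    rw [div_mul_eq_mul_div, div_le_div_iff₀ (mul_pos hAkpos hAlpos) (mul_pos hFkpos hFlpos)]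
      at multi
    rw [div_mul_eq_mul_div, div_mul_div_comm,
      div_le_div_iff₀ hFpos (mul_pos hFkpos hFlpos)]
    nlinarith
  have hsX : s ^ sumLT k l = (a ^ sumLT k l) ^ 2 := by
    rw [hs_def, ← pow_mul, ← pow_mul, mul_comm]
  have hsq : Real.sqrt (A / F) * a ^ sumLT k l ≤
      Real.sqrt (Ak / Fk) * Real.sqrt (Al / Fl) := by
    have h1 : Real.sqrt (A / F) * a ^ sumLT k l = Real.sqrt (A / F * s ^ sumLT k l) := by
      rw [Real.sqrt_mul (by positivity), hsX, Real.sqrt_sq (by positivity)]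
    have h2 : Real.sqrt (Ak / Fk) * Real.sqrt (Al / Fl) =
        Real.sqrt (Ak / Fk * (Al / Fl)) := (Real.sqrt_mul (by positivity) _).symm
    rw [h1, h2]
    exact Real.sqrt_le_sqrt star
  -- unfold the weights
  unfold wBall
  rw [← ha_def, ← hs_def, hKL, ← hK, ← hL, ← hA, ← hAk, ← hAl, ← hF, ← hFk, ← hFl,
    sumLT_split k l]
  set G := sumGT k l with hG
  have hcancel : a ^ G * (a ^ G)⁻¹ = 1 := mul_inv_cancel₀ (by positivity)
  have hz : (a : ℝ) ^ (-(G : ℤ)) = (a ^ G)⁻¹ := by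
    rw [zpow_neg, zpow_natCast]
  rw [hz]
  calc Real.sqrt (A / F) * a ^ (sumLT k k + sumLT l l + sumLT k l + G) * ρ ^ (K + L) *
        (a ^ G)⁻¹
      = (Real.sqrt (A / F) * a ^ sumLT k l) * (a ^ sumLT k k * a ^ sumLT l l * ρ ^ (K + L)) *
        (a ^ G * (a ^ G)⁻¹) := by
        rw [pow_add, pow_add, pow_add]; ring
    _ = (Real.sqrt (A / F) * a ^ sumLT k l) *
        (a ^ sumLT k k * a ^ sumLT l l * ρ ^ (K + L)) := by rw [hcancel, mul_one]
    _ ≤ (Real.sqrt (Ak / Fk) * Real.sqrt (Al / Fl)) *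
        (a ^ sumLT k k * a ^ sumLT l l * ρ ^ (K + L)) := by
        apply mul_le_mul_of_nonneg_right hsq
        positivity
    _ = (Real.sqrt (Ak / Fk) * a ^ sumLT k k * ρ ^ K) *
        (Real.sqrt (Al / Fl) * a ^ sumLT l l * ρ ^ L) := by
        rw [pow_add ρ K L]; ring
end

section
/- Let q ∈ (0,1) and ρ > 0. For every element a = Σ_k c_k x^k of 𝒪_q^reg(ℂⁿ), the Fock-representation operator norm satisfies ‖π(γ_ρ(a))‖² ≥ (q²;q²)_∞ⁿ Σ_k |c_k|² w_q(k)² ρ^{2|k|}, where w_q(k) = q^{Σ_{i<j} k_i k_j} and γ_ρ is the algebra automorphism with γ_ρ(x_i) = ρ x_i. -/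
open Finset

lemma aux_qNum (s : ℝ) (t : ℕ) : (1 - s) * qNum s (t + 1) = 1 - s ^ (t + 1) := by
  have h := geom_sum_mul s (t + 1)
  unfold qNum
  nlinarith [h]

lemma aux_summable_log {r : ℝ} (hr0 : 0 < r) (hr1 : r < 1) :
    Summable fun j : ℕ => Real.log (1 - r ^ (j + 1)) := by
  rw [← summable_neg_iff]
  have hpos : ∀ j : ℕ, 0 < 1 - r ^ (j + 1) := by
    intro j
    have : r ^ (j + 1) < 1 := pow_lt_one₀ hr0.le hr1 (Nat.succ_ne_zero j)
    linarith
  apply Summable.of_nonneg_of_le (fun j => ?_) (fun j => ?_)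
    (((summable_geometric_of_lt_one hr0.le hr1).mul_left (1 / (1 - r))).mul_left r)
  · have : 1 - r ^ (j + 1) ≤ 1 := by
      have : 0 < r ^ (j + 1) := pow_pos hr0 _
      linarith
    have := Real.log_nonpos (by linarith [hpos j]) this
    linarith
  · -- -log(1-x) ≤ x/(1-r) with x = r^(j+1) ≤ r
    have hx1 : r ^ (j + 1) ≤ r := by
      calc r ^ (j + 1) ≤ r ^ 1 := pow_le_pow_of_le_one hr0.le hr1.le (by omega)
        _ = r := pow_one r
    have h1 : Real.log ((1 - r ^ (j + 1))⁻¹) ≤ (1 - r ^ (j + 1))⁻¹ - 1 :=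
      Real.log_le_sub_one_of_pos (inv_pos.2 (hpos j))
    rw [Real.log_inv] at h1
    have h2 : (1 - r ^ (j + 1))⁻¹ - 1 ≤ r * (1 / (1 - r) * r ^ j) := by
      have hp := hpos j
      rw [inv_eq_one_div, div_sub' (ne_of_gt hp)]
      rw [div_le_iff₀ hp]
      have hrr : 0 < 1 - r := by linarith
      have hxx : r * (1 / (1 - r) * r ^ j) = r ^ (j+1) / (1 - r) := by ring
      rw [hxx, div_mul_eq_mul_div, le_div_iff₀ hrr]
      have hpj : (0:ℝ) < r ^ (j+1) := pow_pos hr0 _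
      nlinarith
    linarith

lemma aux_tprod_eq {r : ℝ} (hr0 : 0 < r) (hr1 : r < 1) :
    (∏' j : ℕ, (1 - r ^ (j + 1))) =
      Real.exp (∑' j : ℕ, Real.log (1 - r ^ (j + 1))) := by
  have hpos : ∀ j : ℕ, 0 < 1 - r ^ (j + 1) := by
    intro j
    have : r ^ (j + 1) < 1 := pow_lt_one₀ hr0.le hr1 (Nat.succ_ne_zero j)
    linarith
  have := Real.rexp_tsum_eq_tprod (f := fun j : ℕ => 1 - r ^ (j + 1)) hpos
    (aux_summable_log hr0 hr1)
  exact this.symm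

lemma aux_tprod_pos {r : ℝ} (hr0 : 0 < r) (hr1 : r < 1) :
    0 < ∏' j : ℕ, (1 - r ^ (j + 1)) := by
  rw [aux_tprod_eq hr0 hr1]; exact Real.exp_pos _

lemma aux_tprod_le {r : ℝ} (hr0 : 0 < r) (hr1 : r < 1) (ℓ : ℕ) :
    (∏' j : ℕ, (1 - r ^ (j + 1))) ≤ ∏ t ∈ Finset.range ℓ, (1 - r ^ (t + 1)) := by
  have hpos : ∀ j : ℕ, 0 < 1 - r ^ (j + 1) := by
    intro j
    have : r ^ (j + 1) < 1 := pow_lt_one₀ hr0.le hr1 (Nat.succ_ne_zero j)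
    linarith
  rw [aux_tprod_eq hr0 hr1]
  have h1 : (∑' j : ℕ, Real.log (1 - r ^ (j + 1))) ≤
      ∑ t ∈ Finset.range ℓ, Real.log (1 - r ^ (t + 1)) := by
    have hs := aux_summable_log hr0 hr1
    have := Summable.sum_le_tsum (f := fun j : ℕ => -Real.log (1 - r ^ (j + 1)))
      (Finset.range ℓ) (fun i _ => by
        have h1le : 1 - r ^ (i + 1) ≤ 1 := by
          have : 0 < r ^ (i + 1) := pow_pos hr0 _
          linarith
        have := Real.log_nonpos (by linarith [hpos i]) h1le
        simpa using neg_nonneg.2 this) (by rwa [summable_neg_iff])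
    rw [tsum_neg] at this
    simp only [Finset.sum_neg_distrib] at this
    linarith
  calc Real.exp (∑' j : ℕ, Real.log (1 - r ^ (j + 1)))
      ≤ Real.exp (∑ t ∈ Finset.range ℓ, Real.log (1 - r ^ (t + 1))) := Real.exp_le_exp.2 h1
    _ = ∏ t ∈ Finset.range ℓ, (1 - r ^ (t + 1)) := by
        rw [Real.exp_sum]
        exact Finset.prod_congr rfl fun t _ => Real.exp_log (hpos t)

lemma aux_sumLT {n : ℕ} (k : Fin n → ℕ) :
    ∑ j, k j * (∑ i ∈ Finset.univ.filter (fun i : Fin n => j < i), k i) = sumLT k k := by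
  unfold sumLT
  rw [Finset.sum_filter]
  rw [Fintype.sum_prod_type]
  exact Finset.sum_congr rfl fun j _ => by rw [Finset.mul_sum, Finset.sum_filter]

lemma pow_apply_aux {n : ℕ} (q : ℝ) {H : Type*} [NormedAddCommGroup H] [InnerProductSpace ℂ H]
    (e : (Fin n → ℕ) → H) (T : Fin n → H →L[ℂ] H)
    (hT : ∀ (j : Fin n) (k : Fin n → ℕ),
      T j (e k) =
        ((Real.sqrt (1 - q ^ 2) * Real.sqrt (qNum (q ^ 2) (k j + 1)) *
            q ^ (∑ i ∈ Finset.univ.filter (fun i : Fin n => j < i), k i) : ℝ) : ℂ) •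
          e (k + Pi.single j 1))
    (j : Fin n) (m : ℕ) (k : Fin n → ℕ) :
    ((T j) ^ m) (e k) =
      ((∏ t ∈ Finset.range m, (Real.sqrt (1 - q ^ 2) * Real.sqrt (qNum (q ^ 2) (k j + t + 1)) *
          q ^ (∑ i ∈ Finset.univ.filter (fun i : Fin n => j < i), k i)) : ℝ) : ℂ) •
        e (k + Pi.single j m) := by
  induction m generalizing k with
  | zero => simp
  | succ m ih =>
    have hsum : (∑ i ∈ Finset.univ.filter (fun i : Fin n => j < i), (k + Pi.single j 1 : Fin n → ℕ) i)
        = ∑ i ∈ Finset.univ.filter (fun i : Fin n => j < i), k i :=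
      Finset.sum_congr rfl fun i hi => by
        have hij : i ≠ j := ne_of_gt (Finset.mem_filter.1 hi).2
        simp [Pi.single_eq_of_ne hij]
    have hidx : k + Pi.single j 1 + Pi.single j m = k + Pi.single j (m + 1) := by
      funext i
      by_cases h : i = j
      · subst h; simp [Pi.single_eq_same]; ring
      · simp [Pi.single_eq_of_ne h]
    rw [pow_succ, ContinuousLinearMap.mul_apply, hT j k, map_smul, ih (k + Pi.single j 1),
      smul_smul, hidx]
    congr 1
    rw [← Complex.ofReal_mul]
    congr 1
    rw [Finset.prod_range_succ', mul_comm]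
    congr 1
    exact Finset.prod_congr rfl fun t _ => by
      rw [hsum]
      congr 3
      simp [Pi.single_eq_same]
      ring

lemma sum_filter_succ {n : ℕ} (j : Fin n) (g : Fin (n + 1) → ℕ) :
    ∑ i ∈ Finset.univ.filter (fun i : Fin (n + 1) => j.succ < i), g i =
      ∑ i ∈ Finset.univ.filter (fun i : Fin n => j < i), g i.succ := by
  rw [Finset.sum_filter, Finset.sum_filter, Fin.sum_univ_succ]
  simp [Fin.succ_lt_succ_iff]

lemma fock_prod_apply (n : ℕ) (q : ℝ) {H : Type*} [NormedAddCommGroup H]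
    [InnerProductSpace ℂ H]
    (e : (Fin n → ℕ) → H) (T : Fin n → H →L[ℂ] H)
    (hT : ∀ (j : Fin n) (k : Fin n → ℕ),
      T j (e k) =
        ((Real.sqrt (1 - q ^ 2) * Real.sqrt (qNum (q ^ 2) (k j + 1)) *
            q ^ (∑ i ∈ Finset.univ.filter (fun i : Fin n => j < i), k i) : ℝ) : ℂ) •
          e (k + Pi.single j 1))
    (k : Fin n → ℕ) :
    (List.ofFn fun i => (T i) ^ (k i)).prod (e 0) =
      ((∏ j : Fin n, ∏ t ∈ Finset.range (k j),
          (Real.sqrt (1 - q ^ 2) * Real.sqrt (qNum (q ^ 2) (t + 1)) *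
            q ^ (∑ i ∈ Finset.univ.filter (fun i : Fin n => j < i), k i)) : ℝ) : ℂ) • e k := by
  induction n with
  | zero =>
    have hk : k = 0 := Subsingleton.elim _ _
    subst hk
    simp
  | succ n ih =>
    set e' : (Fin n → ℕ) → H := fun m => e (Fin.cons 0 m) with he'
    set T' : Fin n → H →L[ℂ] H := fun i => T i.succ with hT'def
    set k' : Fin n → ℕ := fun i => k i.succ with hk'
    have hcons_add : ∀ (a : ℕ) (m : Fin n → ℕ) (j : Fin n),
        (Fin.cons a m : Fin (n+1) → ℕ) + Pi.single j.succ 1 =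
          Fin.cons a (m + Pi.single j 1) := by
      intro a m j
      funext i
      refine Fin.cases ?_ (fun i' => ?_) i
      · simp [Pi.single_eq_of_ne (Fin.succ_ne_zero j).symm]
      · by_cases h : i' = j
        · subst h
          simp [Pi.single_eq_same]
        · simp [Pi.single_eq_of_ne h,
            Pi.single_eq_of_ne (fun hh => h (Fin.succ_injective n hh))]
    have hT' : ∀ (j : Fin n) (m : Fin n → ℕ),
        T' j (e' m) =
          ((Real.sqrt (1 - q ^ 2) * Real.sqrt (qNum (q ^ 2) (m j + 1)) *
              q ^ (∑ i ∈ Finset.univ.filter (fun i : Fin n => j < i), m i) : ℝ) : ℂ) •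
            e' (m + Pi.single j 1) := by
      intro j m
      have hs : (∑ i ∈ Finset.univ.filter (fun i : Fin (n+1) => j.succ < i),
          (Fin.cons 0 m : Fin (n+1) → ℕ) i)
          = ∑ i ∈ Finset.univ.filter (fun i : Fin n => j < i), m i := by
        rw [sum_filter_succ]
        simp
      rw [hT'def, hT j.succ (Fin.cons 0 m), hcons_add, hs]
      simp [he']
    have hzero : (Fin.cons 0 (0 : Fin n → ℕ) : Fin (n+1) → ℕ) = 0 := by
      funext i
      refine Fin.cases ?_ (fun i' => ?_) i <;> simp
    have hconsk : (Fin.cons 0 k' : Fin (n+1) → ℕ) + Pi.single 0 (k 0) = k := by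
      funext i
      refine Fin.cases ?_ (fun i' => ?_) i
      · simp [Pi.single_eq_same]
      · simp [Pi.single_eq_of_ne (Fin.succ_ne_zero i'), hk']
    have hconsk_sum : ∀ j : Fin (n+1),
        (∑ i ∈ Finset.univ.filter (fun i : Fin (n+1) => j < i),
          (Fin.cons 0 k' : Fin (n+1) → ℕ) i) =
        ∑ i ∈ Finset.univ.filter (fun i : Fin (n+1) => j < i), k i := by
      intro j
      refine Finset.sum_congr rfl fun i hi => ?_
      have hi0 : i ≠ 0 := by
        intro h
        subst h
        exact absurd (Finset.mem_filter.1 hi).2 (Fin.not_lt_zero j)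
      obtain ⟨i', rfl⟩ := Fin.eq_succ_of_ne_zero hi0
      simp [hk']
    rw [List.ofFn_succ, List.prod_cons, ContinuousLinearMap.mul_apply]
    have hlist : (List.ofFn fun i : Fin n => T i.succ ^ k i.succ).prod (e 0) =
        ((∏ j : Fin n, ∏ t ∈ Finset.range (k' j),
            (Real.sqrt (1 - q ^ 2) * Real.sqrt (qNum (q ^ 2) (t + 1)) *
              q ^ (∑ i ∈ Finset.univ.filter (fun i : Fin n => j < i), k' i)) : ℝ) : ℂ) •
          e (Fin.cons 0 k') := by
      have h0 : e 0 = e' 0 := congrArg e hzero.symm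
      rw [h0]
      exact ih e' T' hT' k'
    have hreal : (∏ j : Fin (n+1), ∏ t ∈ Finset.range (k j),
          (Real.sqrt (1 - q ^ 2) * Real.sqrt (qNum (q ^ 2) (t + 1)) *
            q ^ (∑ i ∈ Finset.univ.filter (fun i : Fin (n+1) => j < i), k i))) =
        (∏ j : Fin n, ∏ t ∈ Finset.range (k' j),
          (Real.sqrt (1 - q ^ 2) * Real.sqrt (qNum (q ^ 2) (t + 1)) *
            q ^ (∑ i ∈ Finset.univ.filter (fun i : Fin n => j < i), k' i))) *
        (∏ t ∈ Finset.range (k 0),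
          (Real.sqrt (1 - q ^ 2) *
            Real.sqrt (qNum (q ^ 2) ((Fin.cons 0 k' : Fin (n+1) → ℕ) 0 + t + 1)) *
            q ^ (∑ i ∈ Finset.univ.filter (fun i : Fin (n+1) => (0 : Fin (n+1)) < i),
              (Fin.cons 0 k' : Fin (n+1) → ℕ) i))) := by
      rw [Fin.prod_univ_succ, mul_comm]
      congr 1
      · refine Finset.prod_congr rfl fun j _ => ?_
        rw [sum_filter_succ j k]
      · rw [hconsk_sum 0]
        refine Finset.prod_congr rfl fun t _ => ?_
        simp
    rw [hlist, map_smul, pow_apply_aux q e T hT 0 (k 0) (Fin.cons 0 k'), smul_smul, hconsk,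
      hreal, Complex.ofReal_mul]

lemma key_bound {n : ℕ} {q : ℝ} (hq0 : 0 < q) (hq1 : q < 1) (k : Fin n → ℕ) :
    (∏' j : ℕ, (1 - (q ^ 2) ^ (j + 1))) ^ n * (q ^ sumLT k k) ^ 2 ≤
      (∏ j : Fin n, ∏ t ∈ Finset.range (k j),
        (Real.sqrt (1 - q ^ 2) * Real.sqrt (qNum (q ^ 2) (t + 1)) *
          q ^ (∑ i ∈ Finset.univ.filter (fun i : Fin n => j < i), k i))) ^ 2 := by
  have hr0 : (0 : ℝ) < q ^ 2 := by positivity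
  have hr1 : q ^ 2 < 1 := by nlinarith
  have ha : (0 : ℝ) ≤ 1 - q ^ 2 := by linarith
  have hb : ∀ t : ℕ, (0 : ℝ) ≤ qNum (q ^ 2) (t + 1) := fun t =>
    Finset.sum_nonneg fun i _ => by positivity
  have hP : 0 < ∏' j : ℕ, (1 - (q ^ 2) ^ (j + 1)) := aux_tprod_pos hr0 hr1
  set P := ∏' j : ℕ, (1 - (q ^ 2) ^ (j + 1)) with hPdef
  set S : Fin n → ℕ := fun j => ∑ i ∈ Finset.univ.filter (fun i : Fin n => j < i), k i
    with hS
  have hstep : ∀ j : Fin n,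
      P * q ^ (2 * (k j * S j)) ≤
        (∏ t ∈ Finset.range (k j),
          (Real.sqrt (1 - q ^ 2) * Real.sqrt (qNum (q ^ 2) (t + 1)) * q ^ S j)) ^ 2 := by
    intro j
    rw [← Finset.prod_pow]
    have hterm : ∀ t ∈ Finset.range (k j),
        (Real.sqrt (1 - q ^ 2) * Real.sqrt (qNum (q ^ 2) (t + 1)) * q ^ S j) ^ 2 =
          (1 - (q ^ 2) ^ (t + 1)) * ((q ^ S j) ^ 2) := by
      intro t _
      rw [mul_pow, mul_pow, Real.sq_sqrt ha, Real.sq_sqrt (hb t), aux_qNum]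
    rw [Finset.prod_congr rfl hterm, Finset.prod_mul_distrib, Finset.prod_const,
      Finset.card_range]
    have h2 : ((q ^ S j) ^ 2) ^ (k j) = q ^ (2 * (k j * S j)) := by
      rw [← pow_mul, ← pow_mul]
      ring_nf
    rw [h2]
    exact mul_le_mul_of_nonneg_right (aux_tprod_le hr0 hr1 (k j)) (by positivity)
  calc P ^ n * (q ^ sumLT k k) ^ 2
      = ∏ j : Fin n, (P * q ^ (2 * (k j * S j))) := by
        rw [Finset.prod_mul_distrib, Finset.prod_const, Finset.card_univ, Fintype.card_fin,
          Finset.prod_pow_eq_pow_sum, ← Finset.mul_sum, ← pow_mul, mul_comm (2 : ℕ),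
          aux_sumLT k]
    _ ≤ ∏ j : Fin n, (∏ t ∈ Finset.range (k j),
          (Real.sqrt (1 - q ^ 2) * Real.sqrt (qNum (q ^ 2) (t + 1)) * q ^ S j)) ^ 2 :=
        Finset.prod_le_prod (fun j _ => by positivity) (fun j _ => hstep j)
    _ = _ := by rw [Finset.prod_pow]

/-- For `q ∈ (0,1)`, `ρ > 0` and `a = Σ_k c_k x^k ∈ 𝒪_q^reg(ℂⁿ)`, the Fock-representation
operator norm satisfies `‖π(γ_ρ(a))‖² ≥ (q²;q²)_∞ⁿ Σ_k |c_k|² w_q(k)² ρ^(2|k|)`, where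
`w_q(k) = q^(Σ_{i<j} kᵢ kⱼ)` and `γ_ρ(xᵢ) = ρ xᵢ`.  The Fock representation `π` is any
family of operators `T j` on a Hilbert space acting on an orthonormal family `{e_k}` by the
Pusz–Woronowicz formula, and `π(γ_ρ(a)) = Σ_k c_k ρ^|k| π(x^k)`. -/
theorem stmt17 {n : ℕ} (q : ℝ) (hq0 : 0 < q) (hq1 : q < 1) (ρ : ℝ) (hρ : 0 < ρ)
    (H : Type*) [NormedAddCommGroup H] [InnerProductSpace ℂ H]
    (e : (Fin n → ℕ) → H) (he : Orthonormal ℂ e)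
    (T : Fin n → H →L[ℂ] H)
    (hT : ∀ (j : Fin n) (k : Fin n → ℕ),
      T j (e k) =
        ((Real.sqrt (1 - q ^ 2) * Real.sqrt (qNum (q ^ 2) (k j + 1)) *
            q ^ (∑ i ∈ Finset.univ.filter (fun i : Fin n => j < i), k i) : ℝ) : ℂ) •
          e (k + Pi.single j 1))
    (c : (Fin n → ℕ) →₀ ℂ) :
    (∏' j : ℕ, (1 - (q ^ 2) ^ (j + 1))) ^ n *
        ∑ k ∈ c.support,
          ‖c k‖ ^ 2 * (q ^ (sumLT k k)) ^ 2 * ρ ^ (2 * ∑ i, k i) ≤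
      ‖∑ k ∈ c.support,
          (c k * (ρ : ℂ) ^ (∑ i, k i)) • (List.ofFn fun i => (T i) ^ (k i)).prod‖ ^ 2 := by
  classical
  set L : (Fin n → ℕ) → ℝ := fun k => ∏ j : Fin n, ∏ t ∈ Finset.range (k j),
    (Real.sqrt (1 - q ^ 2) * Real.sqrt (qNum (q ^ 2) (t + 1)) *
      q ^ (∑ i ∈ Finset.univ.filter (fun i : Fin n => j < i), k i)) with hL
  set l : (Fin n → ℕ) → ℂ := fun k => c k * (ρ : ℂ) ^ (∑ i, k i) * (L k : ℂ) with hl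
  set A : H →L[ℂ] H := ∑ k ∈ c.support,
    (c k * (ρ : ℂ) ^ (∑ i, k i)) • (List.ofFn fun i => (T i) ^ (k i)).prod with hA
  have hAe : A (e 0) = ∑ k ∈ c.support, l k • e k := by
    rw [hA, ContinuousLinearMap.sum_apply]
    refine Finset.sum_congr rfl fun k _ => ?_
    rw [ContinuousLinearMap.smul_apply, fock_prod_apply n q e T hT k, smul_smul]
  have hnorm : ‖A (e 0)‖ ^ 2 = ∑ k ∈ c.support, ‖l k‖ ^ 2 := by
    rw [hAe, norm_sq_eq_re_inner (𝕜 := ℂ), he.inner_sum l l c.support]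
    rw [map_sum]
    refine Finset.sum_congr rfl fun k _ => ?_
    rw [mul_comm, Complex.mul_conj]
    simp [← Complex.sq_norm]
    norm_cast
  have hmain : ∀ k : Fin n → ℕ,
      (∏' j : ℕ, (1 - (q ^ 2) ^ (j + 1))) ^ n *
        (‖c k‖ ^ 2 * (q ^ (sumLT k k)) ^ 2 * ρ ^ (2 * ∑ i, k i)) ≤
      ‖l k‖ ^ 2 := by
    intro k
    have habs : ‖l k‖ ^ 2 =
        ‖c k‖ ^ 2 * ρ ^ (2 * ∑ i, k i) * L k ^ 2 := by
      rw [hl]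
      simp only [norm_mul, norm_pow, Complex.norm_real, Real.norm_eq_abs]
      rw [abs_of_pos hρ, abs_of_nonneg (by
        rw [hL]
        exact Finset.prod_nonneg fun j _ => Finset.prod_nonneg fun t _ => by positivity)]
      ring_nf
    rw [habs]
    have := key_bound hq0 hq1 k
    have hnn : (0 : ℝ) ≤ ‖c k‖ ^ 2 * ρ ^ (2 * ∑ i, k i) := by positivity
    calc (∏' j : ℕ, (1 - (q ^ 2) ^ (j + 1))) ^ n *
          (‖c k‖ ^ 2 * (q ^ (sumLT k k)) ^ 2 * ρ ^ (2 * ∑ i, k i))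
        = (‖c k‖ ^ 2 * ρ ^ (2 * ∑ i, k i)) *
            ((∏' j : ℕ, (1 - (q ^ 2) ^ (j + 1))) ^ n * (q ^ (sumLT k k)) ^ 2) := by ring
      _ ≤ (‖c k‖ ^ 2 * ρ ^ (2 * ∑ i, k i)) * L k ^ 2 :=
          mul_le_mul_of_nonneg_left this hnn
      _ = ‖c k‖ ^ 2 * ρ ^ (2 * ∑ i, k i) * L k ^ 2 := by ring
  have hopnorm : ‖A (e 0)‖ ^ 2 ≤ ‖A‖ ^ 2 := by
    have h1 : ‖A (e 0)‖ ≤ ‖A‖ := by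
      have := A.le_opNorm (e 0)
      rwa [he.1 0, mul_one] at this
    exact pow_le_pow_left₀ (norm_nonneg _) h1 2
  calc (∏' j : ℕ, (1 - (q ^ 2) ^ (j + 1))) ^ n *
        ∑ k ∈ c.support, ‖c k‖ ^ 2 * (q ^ (sumLT k k)) ^ 2 * ρ ^ (2 * ∑ i, k i)
      = ∑ k ∈ c.support, (∏' j : ℕ, (1 - (q ^ 2) ^ (j + 1))) ^ n *
          (‖c k‖ ^ 2 * (q ^ (sumLT k k)) ^ 2 * ρ ^ (2 * ∑ i, k i)) :=
        Finset.mul_sum _ _ _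
    _ ≤ ∑ k ∈ c.support, ‖l k‖ ^ 2 :=
        Finset.sum_le_sum fun k _ => hmain k
    _ = ‖A (e 0)‖ ^ 2 := hnorm.symm
    _ ≤ ‖A‖ ^ 2 := hopnorm
end

section
/- For every multi-index k ∈ ℤ₊ⁿ and every integer m with 0 ≤ m ≤ Σ_{i<j} k_i k_j, there exists a word α ∈ {1,…,n}^{|k|} with letter-content p(α) = k, at most n+2 descent-blocks (s(α) ≤ n+2), and m(α) = m, so that x^k = x_α z^m holds in the algebra 𝒪_def^reg(ℂⁿ). -/
open Finset

/-- The number of inversions of a word `α : Fin d → Fin n`. -/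
def inversions {d n : ℕ} (α : Fin d → Fin n) : ℕ :=
  (Finset.univ.filter (fun p : Fin d × Fin d => p.1 < p.2 ∧ α p.2 < α p.1)).card

/-- `s(α)`: the number of indices `i` with `α_i ≠ α_{i+1}`. -/
def sCount {d n : ℕ} (α : Fin d → Fin n) : ℕ :=
  (Finset.univ.filter
    (fun i : Fin d => ∃ h : (i : ℕ) + 1 < d, α i ≠ α ⟨(i : ℕ) + 1, h⟩)).card



open Finset

variable {β : Type*}

/-- number of inversions of a list -/
def linv [LinearOrder β] : List β → ℕ
  | [] => 0
  | a :: t => t.countP (fun b => decide (b < a)) + linv t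

/-- number of cross-inversions between two lists -/
def cross [LinearOrder β] (u v : List β) : ℕ :=
  (u.map (fun a => v.countP (fun b => decide (b < a)))).sum

/-- number of adjacent unequal pairs -/
def rr [DecidableEq β] : List β → ℕ
  | [] => 0
  | [_] => 0
  | a :: b :: t => (if a = b then 0 else 1) + rr (b :: t)

section listlemmas
variable [LinearOrder β] (u v v₁ v₂ : List β) (a b : β) (t : ℕ)

@[simp] lemma linv_nil : linv ([] : List β) = 0 := rfl
@[simp] lemma linv_cons : linv (a :: u) = u.countP (fun b => decide (b < a)) + linv u := rfl
@[simp] lemma cross_nil : cross ([] : List β) v = 0 := rfl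
@[simp] lemma cross_cons : cross (a :: u) v = v.countP (fun b => decide (b < a)) + cross u v := by
  simp [cross]

lemma linv_append : ∀ u : List β, linv (u ++ v) = linv u + cross u v + linv v := by
  intro u
  induction u with
  | nil => simp
  | cons a u ih => simp [List.countP_append, ih]; ring

@[simp] lemma linv_replicate : linv (List.replicate t a) = 0 := by
  induction t with
  | zero => rfl
  | succ t ih =>
    have h0 : (List.replicate t a).countP (fun b => decide (b < a)) = 0 :=
      List.countP_eq_zero.2 (by intro b hb; simp [List.eq_of_mem_replicate hb])
    simp [List.replicate_succ, ih, h0]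

lemma cross_append : cross u (v₁ ++ v₂) = cross u v₁ + cross u v₂ := by
  induction u with
  | nil => simp
  | cons a u ih => simp [List.countP_append, ih]; ring

lemma cross_replicate_left : cross (List.replicate t a) v
    = t * v.countP (fun b => decide (b < a)) := by
  simp [cross, List.map_replicate, List.sum_replicate, smul_eq_mul]

lemma cross_eq_zero {u v : List β} (h : ∀ a ∈ u, ∀ b ∈ v, ¬ b < a) : cross u v = 0 := by
  induction u with
  | nil => rfl
  | cons a u ih =>
    simp only [cross_cons]
    rw [List.countP_eq_zero.2, ih fun a ha b hb => h a (List.mem_cons_of_mem _ ha) b hb]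
    · intro b hb
      simpa using h a List.mem_cons_self b hb

end listlemmas

section rrlemmas
variable [DecidableEq β] (u v : List β) (a b : β) (t : ℕ)

@[simp] lemma rr_nil : rr ([] : List β) = 0 := rfl
@[simp] lemma rr_single : rr [a] = 0 := rfl
lemma rr_cons_cons (t : List β) : rr (a :: b :: t) = (if a = b then 0 else 1) + rr (b :: t) := rfl

lemma rr_cons_le : rr (a :: v) ≤ 1 + rr v := by
  cases v with
  | nil => simp [rr]
  | cons b t => rw [rr_cons_cons]; split <;> omega

lemma rr_le_cons : rr v ≤ rr (a :: v) := by
  cases v with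
  | nil => simp [rr]
  | cons b t => rw [rr_cons_cons]; split <;> omega

lemma rr_append_le : ∀ u, rr (u ++ v) ≤ rr u + rr v + 1 := by
  intro u
  induction u with
  | nil => simp
  | cons a u ih =>
    cases u with
    | nil => have := rr_cons_le v a; simpa using by omega
    | cons c u' =>
      simp only [List.cons_append, rr_cons_cons] at ih ⊢
      split <;> omega

lemma rr_le_append : ∀ u, rr u + rr v ≤ rr (u ++ v) := by
  intro u
  induction u with
  | nil => simp
  | cons a u ih =>
    cases u with
    | nil => have := rr_le_cons v a; simpa using by omega
    | cons c u' =>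
      simp only [List.cons_append, rr_cons_cons] at ih ⊢
      split <;> omega

@[simp] lemma rr_replicate : rr (List.replicate t a) = 0 := by
  induction t with
  | zero => rfl
  | succ t ih =>
    cases t with
    | zero => rfl
    | succ t' => simpa [List.replicate_succ, rr_cons_cons] using ih

end rrlemmas

/-- sum of the first `n` values of `k` -/
def sumk (k : ℕ → ℕ) (n : ℕ) : ℕ := ∑ i ∈ Finset.range n, k i

/-- `Σ_{i<j<n} k i * k j` -/
def SL (k : ℕ → ℕ) : ℕ → ℕ
  | 0 => 0
  | n + 1 => SL k n + k n * sumk k n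

/-- the ascending canonical word with content `k` on letters `< n` -/
def asc (k : ℕ → ℕ) : ℕ → List ℕ
  | 0 => []
  | n + 1 => asc k n ++ List.replicate (k n) n

/-- the word construction -/
def wrd (k : ℕ → ℕ) : ℕ → ℕ → List ℕ
  | 0, _ => []
  | n + 1, m =>
    if k n * sumk k n ≤ m then
      List.replicate (k n) n ++ wrd k n (m - k n * sumk k n)
    else
      List.replicate (m / sumk k n) n ++
        ((asc k n).take (sumk k n - m % sumk k n) ++
          (n :: ((asc k n).drop (sumk k n - m % sumk k n) ++
            List.replicate (k n - 1 - m / sumk k n) n)))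

variable {k : ℕ → ℕ}

lemma asc_mem : ∀ n, ∀ a ∈ asc k n, a < n := by
  intro n
  induction n with
  | zero => simp [asc]
  | succ n ih =>
    intro a ha
    rcases List.mem_append.1 ha with h | h
    · exact (ih a h).trans (Nat.lt_succ_self n)
    · simp [List.eq_of_mem_replicate h]

lemma asc_length : ∀ n, (asc k n).length = sumk k n := by
  intro n
  induction n with
  | zero => rfl
  | succ n ih => simp [asc, ih, sumk, Finset.sum_range_succ]

lemma asc_count : ∀ n i, (asc k n).count i = if i < n then k i else 0 := by
  intro n
  induction n with
  | zero => simp [asc]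
  | succ n ih =>
    intro i
    rw [asc, List.count_append, ih, List.count_replicate]
    rcases Nat.lt_trichotomy i n with h | h | h
    · simp [h, h.trans (Nat.lt_succ_self n), Nat.ne_of_gt h]
    · subst h; simp
    · have : ¬ i < n + 1 := by omega
      simp [Nat.lt_asymm h, this, Nat.ne_of_lt h]

lemma asc_linv : ∀ n, linv (asc k n) = 0 := by
  intro n
  induction n with
  | zero => rfl
  | succ n ih =>
    rw [asc, linv_append, ih, cross_eq_zero, linv_replicate]
    intro a ha b hb
    have := asc_mem n a ha
    have := List.eq_of_mem_replicate hb
    omega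

lemma asc_sorted : ∀ n, List.Pairwise (· ≤ ·) (asc k n) := by
  intro n
  induction n with
  | zero => exact List.Pairwise.nil
  | succ n ih =>
    rw [asc, List.pairwise_append]
    refine ⟨ih, List.pairwise_replicate.2 (Or.inr (le_refl n)), ?_⟩
    intro a ha b hb
    have := asc_mem n a ha
    have := List.eq_of_mem_replicate hb
    omega

lemma asc_rr : ∀ n, rr (asc k (n + 1)) ≤ n := by
  intro n
  induction n with
  | zero => simp [asc]
  | succ n ih =>
    have h := rr_append_le (List.replicate (k (n+1)) (n+1)) (asc k (n+1))
    rw [show asc k (n+1+1) = asc k (n+1) ++ List.replicate (k (n+1)) (n+1) from rfl]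
    simp at h
    omega

lemma sumk_succ (k : ℕ → ℕ) (n : ℕ) : sumk k (n + 1) = sumk k n + k n :=
  Finset.sum_range_succ k n

lemma wrd_spec : ∀ n m, m ≤ SL k n →
    (∀ a ∈ wrd k n m, a < n) ∧ (wrd k n m).length = sumk k n ∧
    (∀ i, (wrd k n m).count i = if i < n then k i else 0) ∧
    linv (wrd k n m) = m ∧ rr (wrd k n m) ≤ n + 2 := by
  intro n
  induction n with
  | zero =>
    intro m hm
    have : m = 0 := by simpa [SL] using hm
    subst this
    refine ⟨by simp [wrd], by simp [wrd, sumk], by simp [wrd], by simp [wrd], by simp [wrd]⟩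
  | succ n ih =>
    intro m hm
    rw [show wrd k (n+1) m = if k n * sumk k n ≤ m then
      List.replicate (k n) n ++ wrd k n (m - k n * sumk k n)
    else
      List.replicate (m / sumk k n) n ++
        ((asc k n).take (sumk k n - m % sumk k n) ++
          (n :: ((asc k n).drop (sumk k n - m % sumk k n) ++
            List.replicate (k n - 1 - m / sumk k n) n))) from rfl]
    rw [SL] at hm
    split_ifs with h
    · -- big case: full top block in front
      obtain ⟨mem, len, cnt, inv, rrb⟩ := ih (m - k n * sumk k n) (by omega)
      refine ⟨?_, ?_, ?_, ?_, ?_⟩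
      · intro a ha
        rcases List.mem_append.1 ha with ha | ha
        · simp [List.eq_of_mem_replicate ha]
        · exact (mem a ha).trans (Nat.lt_succ_self n)
      · simp only [List.length_append, List.length_replicate, len, sumk_succ]
        omega
      · intro i
        have h2 := cnt i
        rw [List.count_append, List.count_replicate, h2]
        rcases Nat.lt_trichotomy i n with hin | hin | hin
        · simp [hin, hin.trans (Nat.lt_succ_self n), Nat.ne_of_gt hin]
        · subst hin; simp
        · have h3 : ¬ i < n + 1 := by omega
          simp [Nat.lt_asymm hin, h3, Nat.ne_of_lt hin]
      · rw [linv_append, linv_replicate, cross_replicate_left, inv,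
          List.countP_eq_length.2 (fun a ha => by simpa using mem a ha),
          len]
        omega
      · have h4 := rr_append_le (wrd k n (m - k n * sumk k n)) (List.replicate (k n) n)
        rw [rr_replicate] at h4
        omega
    · -- interpolation case
      have hS : 0 < sumk k n := by
        rcases Nat.eq_zero_or_pos (sumk k n) with h0 | h0
        · rw [h0, Nat.mul_zero] at h; omega
        · exact h0
      have ht : m / sumk k n < k n := (Nat.div_lt_iff_lt_mul hS).2 (by omega)
      have hs : m % sumk k n < sumk k n := Nat.mod_lt _ hS
      have hts : sumk k n * (m / sumk k n) + m % sumk k n = m := Nat.div_add_mod m _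
      have hn : 0 < n := by
        rcases Nat.eq_zero_or_pos n with h0 | h0
        · subst h0; simp [sumk] at hS
        · exact h0
      set S := sumk k n with hSdef
      set t := m / S with htdef
      set s := m % S with hsdef
      set c := S - s with hcdef
      set A := asc k n with hAdef
      set rep₂ := List.replicate (k n - 1 - t) n with hrep2
      have hAlen : A.length = S := asc_length n
      have hAmem : ∀ a ∈ A, a < n := asc_mem n
      have memT : ∀ a ∈ A.take c, a < n := fun a ha => hAmem a (List.mem_of_mem_take ha)
      have memD : ∀ a ∈ A.drop c, a < n := fun a ha => hAmem a (List.mem_of_mem_drop ha)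
      have lenT : (A.take c).length = c := by rw [List.length_take, hAlen]; omega
      have lenD : (A.drop c).length = s := by rw [List.length_drop, hAlen]; omega
      have h0 : linv (A.take c) + cross (A.take c) (A.drop c) + linv (A.drop c) = 0 := by
        rw [← linv_append, List.take_append_drop, asc_linv]
      have cT : (A.take c).countP (fun b => decide (b < n)) = c := by
        have h1 : (A.take c).countP (fun b => decide (b < n)) = (A.take c).length :=
          List.countP_eq_length.2 (fun a ha => by simpa using memT a ha)
        omega
      have cD : (A.drop c).countP (fun b => decide (b < n)) = s := by
        have h1 : (A.drop c).countP (fun b => decide (b < n)) = (A.drop c).length :=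
          List.countP_eq_length.2 (fun a ha => by simpa using memD a ha)
        omega
      have cR : ∀ r : ℕ, (List.replicate r n).countP (fun b => decide (b < n)) = 0 :=
        fun r => List.countP_eq_zero.2 (fun a ha => by simp [List.eq_of_mem_replicate ha])
      refine ⟨?_, ?_, ?_, ?_, ?_⟩
      · intro a ha
        simp only [List.mem_append, List.mem_cons] at ha
        rcases ha with ha | ha | ha | ha | ha
        · simp [List.eq_of_mem_replicate ha]
        · exact (memT a ha).trans (Nat.lt_succ_self n)
        · omega
        · exact (memD a ha).trans (Nat.lt_succ_self n)
        · simp [List.eq_of_mem_replicate ha]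
      · rw [hrep2]
        simp only [List.length_append, List.length_replicate, List.length_cons,
          lenT, lenD, sumk_succ]
        omega
      · intro i
        have hA := asc_count (k := k) n i
        have hTD : (A.take c).count i + (A.drop c).count i = A.count i := by
          rw [← List.count_append, List.take_append_drop]
        rw [hA] at hTD
        rw [hrep2]
        by_cases hin : i = n
        · subst hin
          simp only [List.count_append, List.count_cons, List.count_replicate, beq_iff_eq]
          split_ifs at hTD ⊢ <;> omega
        · simp only [List.count_append, List.count_cons, List.count_replicate, beq_iff_eq]
          split_ifs at hTD ⊢ <;> omega
      · have hz1 : cross (A.take c) [n] = 0 := cross_eq_zero (by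
          intro a ha b hb; have := memT a ha; simp at hb; omega)
        have hz2 : cross (A.take c) (List.replicate (k n - 1 - t) n) = 0 := cross_eq_zero (by
          intro a ha b hb; have := memT a ha; have := List.eq_of_mem_replicate hb; omega)
        have hz3 : cross (A.drop c) (List.replicate (k n - 1 - t) n) = 0 := cross_eq_zero (by
          intro a ha b hb; have := memD a ha; have := List.eq_of_mem_replicate hb; omega)
        have c1 : ([n] : List ℕ).countP (fun b => decide (b < n)) = 0 := by simp
        rw [hrep2]
        rw [show (n : ℕ) :: (A.drop c ++ List.replicate (k n - 1 - t) n)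
          = [n] ++ (A.drop c ++ List.replicate (k n - 1 - t) n) from rfl]
        simp only [linv_append, cross_append, List.countP_append, linv_cons, linv_nil,
          List.countP_nil, cross_cons, cross_nil, linv_replicate, cross_replicate_left,
          cT, cD, cR, c1, hz1, hz2, hz3]
        have hcs : c + s = S := by omega
        have hexp : t * c + (t * 0 + (t * s + t * 0)) = S * t := by
          rw [show t * c + (t * 0 + (t * s + t * 0)) = t * (c + s) from by ring, hcs,
            Nat.mul_comm]
        rw [hexp]
        omega
      · obtain ⟨n', rfl⟩ : ∃ n', n = n' + 1 := ⟨n - 1, by omega⟩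
        have hrA : rr (A.take c) + rr (A.drop c) ≤ n' := by
          have h1 := rr_le_append (v := A.drop c) (A.take c)
          rw [List.take_append_drop] at h1
          exact h1.trans (asc_rr n')
        have h2 := rr_append_le (v := A.take c ++ ((n' + 1) :: (A.drop c ++ rep₂)))
          (List.replicate t (n' + 1))
        have h3 := rr_append_le (v := (n' + 1) :: (A.drop c ++ rep₂)) (A.take c)
        have h4 := rr_cons_le (A.drop c ++ rep₂) (n' + 1)
        have h5 := rr_append_le (v := rep₂) (A.drop c)
        have hr0 : rr rep₂ = 0 := by rw [hrep2]; exact rr_replicate _ _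
        rw [rr_replicate] at h2
        omega

section algebra
variable {A : Type} [Ring A] (z : A) (n : ℕ) (y : ℕ → A)

lemma commQ (hzc : ∀ i, Commute z (y i)) (l : List ℕ) : Commute z (l.map y).prod :=
  Commute.list_prod_right _ _ (by
    intro b hb
    obtain ⟨i, _, rfl⟩ := List.mem_map.1 hb
    exact hzc i)

lemma insert_step (hzc : ∀ i, Commute z (y i))
    (hrel : ∀ i j, i < j → j < n → y i * y j = z * (y j * y i)) :
    ∀ s : List ℕ, s.Pairwise (· ≤ ·) → (∀ b ∈ s, b < n) → ∀ a, a < n →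
      y a * (s.map y).prod * z ^ (s.countP (fun b => decide (b < a)))
        = ((s.orderedInsert (· ≤ ·) a).map y).prod := by
  intro s
  induction s with
  | nil => intro _ _ a _; simp [List.orderedInsert]
  | cons b tl ih =>
    intro hs hmem a han
    rw [List.orderedInsert]
    by_cases hab : a ≤ b
    · rw [if_pos hab]
      have hc : (b :: tl).countP (fun x => decide (x < a)) = 0 := by
        rw [List.countP_eq_zero]
        intro x hx
        have : b ≤ x := by
          rcases List.mem_cons.1 hx with rfl | hx
          · exact le_refl x
          · exact (List.pairwise_cons.1 hs).1 x hx
        simp; omega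
      rw [hc]
      simp [mul_assoc]
    · rw [if_neg hab]
      have hba : b < a := by omega
      set c := tl.countP (fun x => decide (x < a)) with hcdef
      have hcnt : (b :: tl).countP (fun x => decide (x < a)) = c + 1 := by
        rw [List.countP_cons]
        simp [hba, hcdef]
      have htl := ih (List.pairwise_cons.1 hs).2
        (fun x hx => hmem x (List.mem_cons_of_mem _ hx)) a han
      have hzz : Commute z ((tl.map y).prod) := commQ z y hzc tl
      have e1 : z * (tl.map y).prod = (tl.map y).prod * z := hzz.eq
      have e2 : z * z ^ c = z ^ c * z := ((Commute.refl z).pow_right c).eq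
      have key : y a * y b * z = y b * y a := by
        rw [hrel b a hba han]
        exact ((hzc a).mul_right (hzc b)).eq.symm
      calc y a * ((b :: tl).map y).prod * z ^ ((b :: tl).countP (fun x => decide (x < a)))
          = y a * (y b * (tl.map y).prod) * (z ^ c * z) := by
            rw [hcnt, pow_succ, List.map_cons, List.prod_cons]
        _ = (y a * y b * z) * ((tl.map y).prod * z ^ c) := by
            simp only [mul_assoc]
            rw [show z * ((tl.map y).prod * z ^ c) = (tl.map y).prod * (z ^ c * z) from by
              rw [← mul_assoc, e1, mul_assoc, e2]]
        _ = y b * (y a * (tl.map y).prod * z ^ c) := by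
            rw [key]
            simp only [mul_assoc]
        _ = ((b :: (tl.orderedInsert (· ≤ ·) a)).map y).prod := by
            rw [htl, List.map_cons, List.prod_cons]

lemma sort_eq (hzc : ∀ i, Commute z (y i))
    (hrel : ∀ i j, i < j → j < n → y i * y j = z * (y j * y i)) :
    ∀ l : List ℕ, (∀ b ∈ l, b < n) →
      ((l.insertionSort (· ≤ ·)).map y).prod = (l.map y).prod * z ^ linv l := by
  intro l
  induction l with
  | nil => intro _; simp
  | cons a tl ih =>
    intro hmem
    have han : a < n := hmem a List.mem_cons_self
    have hmem' : ∀ b ∈ tl, b < n := fun b hb => hmem b (List.mem_cons_of_mem _ hb)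
    have hmemS : ∀ b ∈ tl.insertionSort (· ≤ ·), b < n := fun b hb =>
      hmem' b ((List.perm_insertionSort (· ≤ ·) tl).mem_iff.1 hb)
    rw [List.insertionSort_cons]
    rw [← insert_step z n y hzc hrel (tl.insertionSort (· ≤ ·))
      (List.pairwise_insertionSort (· ≤ ·) tl) hmemS a han]
    rw [(List.perm_insertionSort (· ≤ ·) tl).countP_eq, ih hmem']
    rw [linv_cons, List.map_cons, List.prod_cons]
    rw [mul_assoc, mul_assoc, ← pow_add, Nat.add_comm]
    rw [mul_assoc]

end algebra

section bridges
variable {β : Type*}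

lemma sum_ite_get (p : β → Prop) [DecidablePred p] :
    ∀ l : List β, (∑ j : Fin l.length, if p (l.get j) then 1 else 0)
      = l.countP (fun b => decide (p b)) := by
  intro l
  induction l with
  | nil => simp
  | cons a t ih =>
    refine Eq.trans (Fin.sum_univ_succ
      (fun j : Fin (t.length + 1) => if p ((a :: t).get j) then 1 else 0)) ?_
    simp only [List.get_cons_zero, List.get_cons_succ']
    rw [List.countP_cons, ih]
    simp only [decide_eq_true_eq]
    split_ifs <;> simp_all <;> omega

lemma card_filter_get (p : β → Prop) [DecidablePred p] (l : List β) :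
    (Finset.univ.filter fun j : Fin l.length => p (l.get j)).card
      = l.countP (fun b => decide (p b)) := by
  rw [Finset.card_filter]; exact sum_ite_get p l

lemma card_filter_get_eq [DecidableEq β] (l : List β) (i : β) :
    (Finset.univ.filter fun j : Fin l.length => l.get j = i).card = l.count i := by
  rw [card_filter_get (fun b => b = i) l, List.count]
  exact List.countP_congr (by intro b _; simp)

lemma sum_inv [LinearOrder β] :
    ∀ l : List β, (∑ i : Fin l.length, ∑ j : Fin l.length,
      if i < j ∧ l.get j < l.get i then 1 else 0) = linv l := by
  intro l
  induction l with
  | nil => simp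
  | cons a t ih =>
    have h1 : (∑ j : Fin (t.length + 1),
        if (0 : Fin (t.length + 1)) < j ∧
          (a :: t).get j < (a :: t).get (0 : Fin (t.length + 1)) then 1 else 0)
        = t.countP (fun b => decide (b < a)) := by
      rw [Fin.sum_univ_succ]
      simp only [lt_self_iff_false, false_and, if_false, List.get_cons_zero,
        List.get_cons_succ', Fin.succ_pos, true_and]
      rw [← sum_ite_get (fun b => b < a) t]
      simp
    have h2 : (∑ i : Fin t.length, ∑ j : Fin (t.length + 1),
        if i.succ < j ∧ (a :: t).get j < (a :: t).get i.succ then 1 else 0) = linv t := by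
      rw [← ih]
      refine Finset.sum_congr rfl fun i _ => ?_
      rw [Fin.sum_univ_succ]
      have h0 : ¬ (i.succ < (0 : Fin (t.length + 1))) := Fin.not_lt_zero _
      simp only [List.get_cons_zero, List.get_cons_succ', Fin.succ_lt_succ_iff, h0,
        false_and, if_false, zero_add]
    refine Eq.trans (Fin.sum_univ_succ (fun i : Fin (t.length + 1) =>
      ∑ j : Fin (t.length + 1),
        if i < j ∧ (a :: t).get j < (a :: t).get i then 1 else 0)) ?_
    rw [h1, h2, linv_cons]

lemma inversions_get {nn : ℕ} (l : List (Fin nn)) : inversions l.get = linv l := by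
  rw [inversions, Finset.card_filter, Fintype.sum_prod_type]
  exact sum_inv l

lemma scount_fun {nn : ℕ} (d : ℕ) (f : Fin (d + 1) → Fin nn) :
    sCount f = (if h : 0 < d then (if f 0 = f ⟨1, by omega⟩ then 0 else 1) else 0)
      + sCount (fun i : Fin d => f i.succ) := by
  rw [sCount, Finset.card_filter, sCount, Finset.card_filter, Fin.sum_univ_succ]
  congr 1
  · by_cases hd : 0 < d
    · rw [dif_pos hd]
      have hidx : ∀ h : ((0 : Fin (d + 1)) : ℕ) + 1 < d + 1,
          (⟨((0 : Fin (d + 1)) : ℕ) + 1, h⟩ : Fin (d + 1)) = ⟨1, by omega⟩ :=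
        fun h => Fin.ext (by simp)
      have hiff : (∃ h : ((0 : Fin (d + 1)) : ℕ) + 1 < d + 1,
          f 0 ≠ f ⟨((0 : Fin (d + 1)) : ℕ) + 1, h⟩) ↔ ¬ (f 0 = f ⟨1, by omega⟩) := by
        constructor
        · rintro ⟨h, hne⟩
          rw [← hidx h]
          exact hne
        · intro hne
          exact ⟨by simp; omega, by rw [hidx]; exact hne⟩
      rw [if_congr hiff rfl rfl, ite_not]
    · rw [dif_neg hd, if_neg]
      rintro ⟨h, _⟩
      simp at h
      omega
  · refine Finset.sum_congr rfl fun i _ => ?_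
    refine if_congr ?_ rfl rfl
    constructor
    · rintro ⟨h, hne⟩
      have h2 : (i : ℕ) + 1 < d := by
        have h3 := h
        simp only [Fin.val_succ] at h3
        omega
      exact ⟨h2, fun heq => hne heq⟩
    · rintro ⟨h, hne⟩
      have h2 : ((i.succ : Fin (d + 1)) : ℕ) + 1 < d + 1 := by
        simp only [Fin.val_succ]
        omega
      exact ⟨h2, fun heq => hne heq⟩

lemma scount_get {nn : ℕ} : ∀ l : List (Fin nn), sCount l.get = rr l := by
  intro l
  induction l with
  | nil => simp [sCount]
  | cons a t ih =>
    have hfun : (fun i : Fin t.length => (a :: t).get i.succ) = t.get := by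
      funext i
      exact List.get_cons_succ'
    rw [show ((a :: t).get : Fin (t.length + 1) → Fin nn) = (a :: t).get from rfl]
    rw [scount_fun t.length ((a :: t).get), hfun, ih]
    cases t with
    | nil => simp
    | cons b t' =>
      have hd : 0 < (b :: t').length := by simp
      rw [dif_pos hd]
      have hg0 : (a :: b :: t').get (0 : Fin ((b :: t').length + 1)) = a := List.get_cons_zero
      have hg1 : (a :: b :: t').get (⟨1, by omega⟩ : Fin ((b :: t').length + 1)) = b := rfl
      rw [hg0, hg1, rr_cons_cons]

lemma finRange_map_val (n : ℕ) : (List.finRange n).map Fin.val = List.range n := by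
  rw [List.finRange_eq_pmap_range, List.map_pmap]
  simp

lemma map_val_pmap {nn : ℕ} : ∀ (u : List ℕ) (h : ∀ a ∈ u, a < nn),
    (u.pmap (fun a ha => (⟨a, ha⟩ : Fin nn)) h).map Fin.val = u := by
  intro u h
  induction u with
  | nil => rfl
  | cons a t ih => simp [List.pmap, ih]

lemma linv_map_val {nn : ℕ} : ∀ l : List (Fin nn), linv (l.map Fin.val) = linv l := by
  intro l
  induction l with
  | nil => rfl
  | cons a t ih =>
    simp only [List.map_cons, linv_cons, ih, List.countP_map]
    have : List.countP ((fun b => decide (b < (a : Fin nn).val)) ∘ Fin.val) t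
        = List.countP (fun b => decide (b < a)) t :=
      List.countP_congr fun b _ => by
        simp only [Function.comp_apply, decide_eq_true_eq]
        exact Iff.symm Fin.lt_def
    omega

lemma rr_map_val {nn : ℕ} : ∀ l : List (Fin nn), rr (l.map Fin.val) = rr l := by
  intro l
  induction l with
  | nil => rfl
  | cons a t ih =>
    cases t with
    | nil => rfl
    | cons b t' =>
      simp only [List.map_cons] at ih ⊢
      rw [rr_cons_cons, rr_cons_cons, ih]
      congr 1
      simp [Fin.val_inj]

end bridges

lemma sum_ite_range (f : ℕ → ℕ) : ∀ N j, j ≤ N →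
    (∑ i ∈ Finset.range N, if i < j then f i else 0) = ∑ i ∈ Finset.range j, f i := by
  intro N
  induction N with
  | zero =>
    intro j hj
    have : j = 0 := by omega
    subst this
    simp
  | succ N ih =>
    intro j hj
    rw [Finset.sum_range_succ]
    by_cases h : j ≤ N
    · rw [ih j h, if_neg (by omega)]
      omega
    · have hj1 : j = N + 1 := by omega
      subst hj1
      rw [if_pos (by omega), Finset.sum_range_succ]
      congr 1
      refine Finset.sum_congr rfl fun i hi => ?_
      exact if_pos (by have := Finset.mem_range.1 hi; omega)

lemma SL_eq_sumLT {n : ℕ} (k : Fin n → ℕ) :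
    sumLT k k = SL (fun i => if h : i < n then k ⟨i, h⟩ else 0) n := by
  set k' : ℕ → ℕ := fun i => if h : i < n then k ⟨i, h⟩ else 0 with hk'
  have hk'v : ∀ i : Fin n, k' i.val = k i := fun i => by simp [hk', i.isLt]
  have hSL : ∀ N, SL k' N = ∑ j ∈ Finset.range N, (∑ i ∈ Finset.range j, k' i) * k' j := by
    intro N
    induction N with
    | zero => rfl
    | succ N ih =>
      rw [show SL k' (N + 1) = SL k' N + k' N * sumk k' N from rfl, ih,
        Finset.sum_range_succ, Nat.mul_comm]
      rfl
  have h1 : ∀ j : Fin n, (∑ i : Fin n, if i < j then k i * k j else 0)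
      = (∑ i ∈ Finset.range j.val, k' i) * k' j.val := by
    intro j
    have e : (∑ i : Fin n, if i < j then k i * k j else 0)
        = ∑ i ∈ Finset.range n, (if i < j.val then k' i * k' j.val else 0) := by
      rw [← Fin.sum_univ_eq_sum_range (fun i => if i < j.val then k' i * k' j.val else 0) n]
      refine Finset.sum_congr rfl fun i _ => ?_
      rw [hk'v i, hk'v j]
      exact if_congr Fin.lt_def rfl rfl
    rw [e, sum_ite_range _ n j.val (le_of_lt j.isLt), Finset.sum_mul]
  rw [sumLT, Finset.sum_filter, Fintype.sum_prod_type, Finset.sum_comm]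
  rw [Finset.sum_congr rfl fun j _ => h1 j]
  rw [Fin.sum_univ_eq_sum_range (fun j => (∑ i ∈ Finset.range j, k' i) * k' j) n]
  rw [hSL n]


/-- For every `k ∈ ℤ₊ⁿ` and every `0 ≤ m ≤ Σ_{i<j} kᵢ kⱼ`, there is a word `α` with
letter-content `k`, with `s(α) ≤ n+2`, and with `m(α) = m`, so that `x^k = x_α z^m` holds
in `𝒪_def^reg(ℂⁿ)`, i.e. in every algebra generated by a central invertible `z` and
`x₁,…,xₙ` subject to `xᵢ xⱼ = z xⱼ xᵢ` (`i < j`). -/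
theorem stmt19 {n : ℕ} (k : Fin n → ℕ) (m : ℕ) (hm : m ≤ sumLT k k) :
    ∃ α : Fin (∑ i, k i) → Fin n,
      (∀ i : Fin n, (Finset.univ.filter (fun j => α j = i)).card = k i) ∧
      sCount α ≤ n + 2 ∧
      inversions α = m ∧
      ∀ (A : Type) [Ring A] (z : A) (x : Fin n → A), IsUnit z →
        (∀ i, Commute (x i) z) →
        (∀ i j : Fin n, i < j → x i * x j = z * (x j * x i)) →
        (List.ofFn fun i => x i ^ k i).prod = (List.ofFn fun j => x (α j)).prod * z ^ m := by
  classical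
  set k' : ℕ → ℕ := fun i => if h : i < n then k ⟨i, h⟩ else 0 with hk'
  have hk'v : ∀ i : Fin n, k' i.val = k i := fun i => by simp [hk', i.isLt]
  have hmle : m ≤ SL k' n := by rw [SL_eq_sumLT k] at hm; exact hm
  obtain ⟨hmem, hlen, hcnt, hlinv, hrr⟩ := wrd_spec (k := k') n m hmle
  set u := wrd k' n m with hu
  set l : List (Fin n) := u.pmap (fun a ha => ⟨a, ha⟩) hmem with hl
  have hmapval : l.map Fin.val = u := map_val_pmap u hmem
  have hlen2 : l.length = ∑ i, k i := by
    have e1 : l.length = u.length := by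
      rw [← hmapval, List.length_map]
    rw [e1, hlen, show sumk k' n = ∑ i ∈ Finset.range n, k' i from rfl,
      ← Fin.sum_univ_eq_sum_range k' n]
    exact Finset.sum_congr rfl fun i _ => hk'v i
  have hcount : ∀ i : Fin n, l.count i = k i := by
    intro i
    calc l.count i = (l.map Fin.val).count i.val :=
          (List.count_map_of_injective _ _ Fin.val_injective _).symm
      _ = u.count i.val := by rw [hmapval]
      _ = k i := by rw [hcnt, if_pos i.isLt]; exact hk'v i
  have hlinv2 : linv l = m := by rw [← linv_map_val l, hmapval, hlinv]
  have hrr2 : rr l ≤ n + 2 := by rw [← rr_map_val l, hmapval]; exact hrr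
  rw [show (∑ i, k i) = l.length from hlen2.symm]
  refine ⟨l.get, ?_, ?_, ?_, ?_⟩
  · intro i
    rw [card_filter_get_eq]
    exact hcount i
  · rw [scount_get]
    exact hrr2
  · rw [inversions_get]
    exact hlinv2
  · intro A _ z x _ hcomm hrel
    set y : ℕ → A := fun i => if h : i < n then x ⟨i, h⟩ else 1 with hy
    have hzc : ∀ i, Commute z (y i) := by
      intro i
      by_cases h : i < n
      · simp only [hy, dif_pos h]
        exact (hcomm ⟨i, h⟩).symm
      · simp only [hy, dif_neg h]
        exact Commute.one_right z
    have hrel' : ∀ i j, i < j → j < n → y i * y j = z * (y j * y i) := by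
      intro i j hij hjn
      have hin : i < n := lt_trans hij hjn
      simp only [hy, dif_pos hin, dif_pos hjn]
      exact hrel ⟨i, hin⟩ ⟨j, hjn⟩ hij
    have hsort : u.insertionSort (· ≤ ·) = asc k' n := by
      apply List.Perm.eq_of_pairwise' (List.pairwise_insertionSort _ _) (asc_sorted n) ?_
      refine (List.perm_insertionSort _ u).trans (List.perm_iff_count.2 fun a => ?_)
      rw [hcnt a]
      exact (asc_count n a).symm
    have hQ := sort_eq z n y hzc hrel' u hmem
    rw [hsort, hlinv] at hQ
    have hblocks : ((asc k' n).map y).prod = (List.ofFn fun i : Fin n => x i ^ k i).prod := by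
      have h1 : ∀ N, ((asc k' N).map y).prod
          = ((List.range N).map (fun i => y i ^ k' i)).prod := by
        intro N
        induction N with
        | zero => rfl
        | succ N ih =>
          rw [show asc k' (N + 1) = asc k' N ++ List.replicate (k' N) N from rfl,
            List.map_append, List.prod_append, ih, List.range_succ, List.map_append,
            List.prod_append, List.map_replicate, List.prod_replicate]
          simp
      rw [h1 n, List.ofFn_eq_map, ← finRange_map_val n, List.map_map]
      refine congrArg List.prod (List.map_congr_left fun i _ => ?_)
      simp [hy, hk'v i, i.isLt]
    have hwx : u.map y = l.map x := by
      rw [← hmapval, List.map_map]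
      refine List.map_congr_left fun j _ => ?_
      simp [hy, j.isLt]
    rw [show (List.ofFn fun j => x (l.get j)) = l.map x from by
      rw [show (fun j => x (l.get j)) = x ∘ l.get from rfl, ← List.map_ofFn, List.ofFn_get]]
    rw [← hwx, ← hblocks]
    exact hQ
end
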